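/- Let P be a finite set of points in the plane, θ ∈ ℝ and x ∈ ℝ². Then x belongs to RCH_θ(P) if and only if for every i ∈ {0,1,2,3} the closed θ-quadrant of type i with apex x contains at least one point of P. -/

import Mathlib

open scoped RealInnerProductSpace

noncomputable section

/-- The Euclidean plane. -/
abbrev Plane := EuclideanSpace ℝ (Fin 2)

/-- The unit vector `w_θ = (cos θ, sin θ)`. -/
def wdir (θ : ℝ) : Plane := WithLp.toLp 2 ![Real.cos θ, Real.sin θ]

/-- The open θ-quadrant of type `i` with apex `x`. -/
def openQuad (θ : ℝ) (i : Fin 4) (x : Plane) : Set Plane :=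
  {z | 0 < ⟪z - x, wdir (θ + (i : ℕ) * (Real.pi / 2))⟫ ∧
       0 < ⟪z - x, wdir (θ + ((i : ℕ) + 1) * (Real.pi / 2))⟫}

/-- The closed θ-quadrant of type `i` with apex `x`. -/
def closedQuad (θ : ℝ) (i : Fin 4) (x : Plane) : Set Plane :=
  {z | 0 ≤ ⟪z - x, wdir (θ + (i : ℕ) * (Real.pi / 2))⟫ ∧
       0 ≤ ⟪z - x, wdir (θ + ((i : ℕ) + 1) * (Real.pi / 2))⟫}

/-- The rectilinear convex hull of `P` with orientation `θ`. -/
def RCH (θ : ℝ) (P : Set Plane) : Set Plane :=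
  Set.univ \ ⋃ (x : Plane) (i : Fin 4) (_ : openQuad θ i x ∩ P = ∅), openQuad θ i x

lemma inner_wdir (α β : ℝ) : ⟪wdir α, wdir β⟫ = Real.cos (α - β) := by
  simp only [wdir, PiLp.inner_apply, RCLike.inner_apply, conj_trivial, Fin.sum_univ_two, WithLp.ofLp_toLp,
    Matrix.cons_val_zero, Matrix.cons_val_one, Matrix.head_cons, Real.cos_sub]
  ring

lemma mem_rch_iff_aux (P : Set Plane) (θ : ℝ) (x : Plane) :
    x ∈ RCH θ P ↔ ∀ y : Plane, ∀ i : Fin 4, openQuad θ i y ∩ P = ∅ → x ∉ openQuad θ i y := by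
  simp only [RCH, Set.mem_diff, Set.mem_univ, true_and, Set.mem_iUnion, not_exists]

/-- A point belongs to the rectilinear convex hull iff each of the four closed
θ-quadrants with apex at that point contains a point of `P`. -/
theorem mem_rch_iff (P : Set Plane) (hP : P.Finite) (θ : ℝ) (x : Plane) :
    x ∈ RCH θ P ↔ ∀ i : Fin 4, (closedQuad θ i x ∩ P).Nonempty := by
  rw [mem_rch_iff_aux]
  constructor
  · intro hx i
    by_contra hne
    rw [Set.not_nonempty_iff_eq_empty] at hne
    set a := θ + (i : ℕ) * (Real.pi / 2) with ha
    set b := θ + ((i : ℕ) + 1) * (Real.pi / 2) with hb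
    have hp' : ∀ p ∈ P, 0 < max (-⟪p - x, wdir a⟫) (-⟪p - x, wdir b⟫) := by
      intro p hp
      have hpc : p ∉ closedQuad θ i x := fun hc =>
        Set.eq_empty_iff_forall_notMem.mp hne p ⟨hc, hp⟩
      simp only [closedQuad, Set.mem_setOf_eq, not_and_or, not_le, ← ha, ← hb] at hpc
      rcases hpc with h | h
      · exact lt_max_of_lt_left (by linarith)
      · exact lt_max_of_lt_right (by linarith)
    obtain ⟨ε, hε0, hε⟩ :
        ∃ ε > (0:ℝ), ∀ p ∈ P, ε ≤ max (-⟪p - x, wdir a⟫) (-⟪p - x, wdir b⟫) := by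
      rcases P.eq_empty_or_nonempty with h0 | hne'
      · exact ⟨1, one_pos, by simp [h0]⟩
      · have hPne : hP.toFinset.Nonempty := by
          simpa [Set.Finite.toFinset_nonempty] using hne'
        refine ⟨hP.toFinset.inf' hPne
          (fun p => max (-⟪p - x, wdir a⟫) (-⟪p - x, wdir b⟫)), ?_, ?_⟩
        · rw [gt_iff_lt, Finset.lt_inf'_iff]
          intro p hp
          exact hp' p (hP.mem_toFinset.mp hp)
        · intro p hp
          exact Finset.inf'_le _ (hP.mem_toFinset.mpr hp)
    set y := x - ε • (wdir a + wdir b) with hy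
    have haa : ⟪wdir a, wdir a⟫ = (1:ℝ) := by rw [inner_wdir]; simp
    have hbb : ⟪wdir b, wdir b⟫ = (1:ℝ) := by rw [inner_wdir]; simp
    have hba : ⟪wdir b, wdir a⟫ = (0:ℝ) := by
      rw [inner_wdir]
      have : b - a = Real.pi / 2 := by rw [ha, hb]; ring
      rw [this, Real.cos_pi_div_two]
    have hab : ⟪wdir a, wdir b⟫ = (0:ℝ) := by
      rw [inner_wdir]
      have : a - b = -(Real.pi / 2) := by rw [ha, hb]; ring
      rw [this, Real.cos_neg, Real.cos_pi_div_two]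
    have key : ∀ z : Plane, ⟪z - y, wdir a⟫ = ⟪z - x, wdir a⟫ + ε ∧
        ⟪z - y, wdir b⟫ = ⟪z - x, wdir b⟫ + ε := by
      intro z
      have hz : z - y = (z - x) + ε • (wdir a + wdir b) := by rw [hy]; abel
      constructor
      · rw [hz, inner_add_left, real_inner_smul_left, inner_add_left, haa, hba]; ring
      · rw [hz, inner_add_left, real_inner_smul_left, inner_add_left, hbb, hab]; ring
    refine hx y i ?_ ?_
    · apply Set.eq_empty_iff_forall_notMem.mpr
      rintro p ⟨hpQ, hpP⟩
      simp only [openQuad, Set.mem_setOf_eq, ← ha, ← hb] at hpQ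
      obtain ⟨k1, k2⟩ := key p
      rw [k1] at hpQ
      rw [k2] at hpQ
      rcases le_max_iff.mp (hε p hpP) with h | h
      · linarith [hpQ.1]
      · linarith [hpQ.2]
    · simp only [openQuad, Set.mem_setOf_eq, ← ha, ← hb]
      obtain ⟨k1, k2⟩ := key x
      rw [k1, k2]
      simp only [sub_self, inner_zero_left]
      constructor <;> linarith
  · intro h y i hfree hxQ
    obtain ⟨p, hpC, hpP⟩ := h i
    refine Set.eq_empty_iff_forall_notMem.mp hfree p ⟨?_, hpP⟩
    simp only [openQuad, closedQuad, Set.mem_setOf_eq] at *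
    have hpy1 : p - y = (p - x) + (x - y) := by abel
    constructor
    · rw [hpy1, inner_add_left]
      linarith [hpC.1, hxQ.1]
    · rw [hpy1, inner_add_left]
      linarith [hpC.2, hxQ.2]
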